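/- Let (X,T) be a topological dynamical system. For any sequence (Φ_k)_{k∈ℕ} of continuous partitions of unity on X with diam(Φ_k) → 0 as k → ∞, and any continuous partition of unity Ψ on X, lim_{k→∞} h̃(Φ_k | Ψ) = h̃(T | Ψ). -/

import Mathlib

open MeasureTheory Filter Set

/-! ### Partitions of unity -/

/-- A finite partition of unity on `X`: a finite family of functions `X → [0,1]`
summing to `1` everywhere. -/
structure PartUnity (X : Type*) where
  n : ℕ
  f : Fin n → X → ℝ
  nonneg : ∀ i x, 0 ≤ f i x
  le_one : ∀ i x, f i x ≤ 1
  sum_one : ∀ x, ∑ i, f i x = 1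

namespace PartUnity

variable {X Y : Type*}

/-- A continuous partition of unity. -/
def Cont [TopologicalSpace X] (Φ : PartUnity X) : Prop := ∀ i, Continuous (Φ.f i)

/-- A measurable partition of unity. -/
def Meas [MeasurableSpace X] (Φ : PartUnity X) : Prop := ∀ i, Measurable (Φ.f i)

/-- A positive partition of unity. -/
def Pos (Φ : PartUnity X) : Prop := ∀ i x, 0 < Φ.f i x

/-- The join `Φ ∨ Ψ = {φ·ψ : φ ∈ Φ, ψ ∈ Ψ}` of two partitions of unity. -/
def join (Φ Ψ : PartUnity X) : PartUnity X where
  n := Φ.n * Ψ.n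
  f k x := Φ.f (finProdFinEquiv.symm k).1 x * Ψ.f (finProdFinEquiv.symm k).2 x
  nonneg k x := mul_nonneg (Φ.nonneg _ x) (Ψ.nonneg _ x)
  le_one k x := mul_le_one₀ (Φ.le_one _ x) (Ψ.nonneg _ x) (Ψ.le_one _ x)
  sum_one x := by
    rw [← Equiv.sum_comp (finProdFinEquiv : Fin Φ.n × Fin Ψ.n ≃ Fin (Φ.n * Ψ.n))
      (fun k => Φ.f (finProdFinEquiv.symm k).1 x * Ψ.f (finProdFinEquiv.symm k).2 x)]
    simp only [Equiv.symm_apply_apply]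
    rw [Fintype.sum_prod_type]
    dsimp only
    rw [← Finset.sum_mul_sum, Φ.sum_one x, Ψ.sum_one x, one_mul]

/-- Pull back a partition of unity by a map: `TΦ = {φ ∘ T : φ ∈ Φ}`. -/
def comp (Φ : PartUnity X) (T : Y → X) : PartUnity Y where
  n := Φ.n
  f i y := Φ.f i (T y)
  nonneg i y := Φ.nonneg i (T y)
  le_one i y := Φ.le_one i (T y)
  sum_one y := Φ.sum_one (T y)

/-- The trivial partition of unity `{1}`. -/
def triv (X : Type*) : PartUnity X where
  n := 1
  f _ _ := 1
  nonneg _ _ := zero_le_one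
  le_one _ _ := le_rfl
  sum_one _ := by simp

/-- `dyn T Φ n` is the dynamical join `Φ₀ⁿ⁻¹ = ⋁_{i=0}^{n-1} TⁱΦ`
(joined with a harmless trivial factor). -/
def dyn (T : X → X) (Φ : PartUnity X) : ℕ → PartUnity X
  | 0 => triv X
  | n + 1 => Φ.join ((dyn T Φ n).comp T)

/-- The product partition of unity `Φ ⊗ Ψ` on `X × Y`. -/
def prod (Φ : PartUnity X) (Ψ : PartUnity Y) : PartUnity (X × Y) where
  n := Φ.n * Ψ.n
  f k p := Φ.f (finProdFinEquiv.symm k).1 p.1 * Ψ.f (finProdFinEquiv.symm k).2 p.2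
  nonneg k p := mul_nonneg (Φ.nonneg _ _) (Ψ.nonneg _ _)
  le_one k p := mul_le_one₀ (Φ.le_one _ _) (Ψ.nonneg _ _) (Ψ.le_one _ _)
  sum_one p := by
    rw [← Equiv.sum_comp (finProdFinEquiv : Fin Φ.n × Fin Ψ.n ≃ Fin (Φ.n * Ψ.n))
      (fun k => Φ.f (finProdFinEquiv.symm k).1 p.1 * Ψ.f (finProdFinEquiv.symm k).2 p.2)]
    simp only [Equiv.symm_apply_apply]
    rw [Fintype.sum_prod_type]
    dsimp only
    rw [← Finset.sum_mul_sum, Φ.sum_one p.1, Ψ.sum_one p.2, one_mul]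

/-- The diameter of a partition of unity: the maximum of the diameters of the
supports of its members. -/
noncomputable def diam [PseudoMetricSpace X] (Φ : PartUnity X) : ℝ :=
  ⨆ i, Metric.diam (tsupport (Φ.f i))

end PartUnity

/-! ### Metric entropy via partitions of unity -/

variable {X Y : Type*}

/-- The static entropy `H̃_μ(Φ) = Σ_φ ( −μ(φ) log μ(φ) + μ(φ log φ) )`. -/
noncomputable def statEnt [MeasurableSpace X] (μ : Measure X) (Φ : PartUnity X) : ℝ :=
  ∑ i, (-((∫ x, Φ.f i x ∂μ) * Real.log (∫ x, Φ.f i x ∂μ)) +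
    ∫ x, Φ.f i x * Real.log (Φ.f i x) ∂μ)

/-- The conditional measure `μ_ψ`, determined by `μ_ψ(φ) = μ(φψ)/μ(ψ)`. -/
noncomputable def condMeas [MeasurableSpace X] (μ : Measure X) (ψ : X → ℝ) : Measure X :=
  (ENNReal.ofReal (∫ x, ψ x ∂μ))⁻¹ • μ.withDensity (fun x => ENNReal.ofReal (ψ x))

/-- The conditional static entropy `H̃_μ(Φ | Ψ) = Σ_ψ μ(ψ) H̃_{μ_ψ}(Φ)`
(terms with `μ(ψ) = 0` vanish since they are multiplied by `μ(ψ) = 0`). -/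
noncomputable def condStatEnt [MeasurableSpace X] (μ : Measure X) (Φ Ψ : PartUnity X) : ℝ :=
  ∑ j, (∫ x, Ψ.f j x ∂μ) * statEnt (condMeas μ (Ψ.f j)) Φ

/-- The local metric entropy `h̃_μ(T,Φ) = lim_n H̃_μ(Φ₀ⁿ⁻¹)/n`. -/
noncomputable def locEnt [MeasurableSpace X] (T : X → X) (μ : Measure X) (Φ : PartUnity X) : ℝ :=
  Filter.atTop.limsup fun n : ℕ => statEnt μ (PartUnity.dyn T Φ n) / (n : ℝ)

/-- The local conditional metric entropy `h̃_μ(T,Φ|Ψ) = lim_n H̃_μ(Φ₀ⁿ⁻¹|Ψ₀ⁿ⁻¹)/n`. -/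
noncomputable def condLocEnt [MeasurableSpace X] (T : X → X) (μ : Measure X)
    (Φ Ψ : PartUnity X) : ℝ :=
  Filter.atTop.limsup fun n : ℕ =>
    condStatEnt μ (PartUnity.dyn T Φ n) (PartUnity.dyn T Ψ n) / (n : ℝ)

/-- The metric entropy `h̃_μ(T)`: supremum of `h̃_μ(T,Φ)` over continuous
partitions of unity. -/
noncomputable def metEnt [TopologicalSpace X] [MeasurableSpace X]
    (T : X → X) (μ : Measure X) : EReal :=
  ⨆ Φ : {Φ : PartUnity X // Φ.Cont}, ((locEnt T μ Φ.1 : ℝ) : EReal)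

/-! ### Topological entropy via partitions of unity -/

/-- The topological static entropy `H̃(Φ) = Σ_φ sup φ`. -/
noncomputable def topStat (Φ : PartUnity X) : ℝ := ∑ i, ⨆ x, Φ.f i x

/-- The local topological entropy `h̃(T,Φ) = lim_n (1/n) log H̃(Φ₀ⁿ⁻¹)`. -/
noncomputable def topLocEnt (T : X → X) (Φ : PartUnity X) : ℝ :=
  Filter.atTop.limsup fun n : ℕ => Real.log (topStat (PartUnity.dyn T Φ n)) / (n : ℝ)

/-- The topological entropy `h̃_top(T)`: supremum of `h̃(T,Φ)` over continuous
partitions of unity. -/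
noncomputable def topEnt [TopologicalSpace X] (T : X → X) : EReal :=
  ⨆ Φ : {Φ : PartUnity X // Φ.Cont}, ((topLocEnt T Φ.1 : ℝ) : EReal)

/-! ### Classical Kolmogorov–Sinai entropy -/

/-- A finite Borel partition of `X` (indexed; atoms may be empty). -/
structure FinBorelPart (X : Type*) [MeasurableSpace X] where
  n : ℕ
  A : Fin n → Set X
  meas : ∀ i, MeasurableSet (A i)
  disj : ∀ i j, i ≠ j → Disjoint (A i) (A j)
  cover : ⋃ i, A i = Set.univ

/-- Local Kolmogorov–Sinai entropy `h_μ(T,𝒜) = lim_n (1/n) Σ_{A ∈ 𝒜₀ⁿ⁻¹} −μ(A) log μ(A)`. -/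
noncomputable def ksLocEnt [MeasurableSpace X] (T : X → X) (μ : Measure X)
    (P : FinBorelPart X) : ℝ :=
  Filter.atTop.limsup fun n : ℕ =>
    (∑ σ : Fin n → Fin P.n,
      Real.negMulLog (μ (⋂ i : Fin n, T^[(i : ℕ)] ⁻¹' P.A (σ i))).toReal) / (n : ℝ)

/-- The Kolmogorov–Sinai metric entropy `h_μ(T)`. -/
noncomputable def ksEnt [MeasurableSpace X] (T : X → X) (μ : Measure X) : EReal :=
  ⨆ P : FinBorelPart X, ((ksLocEnt T μ P : ℝ) : EReal)

/-! ### Classical topological entropy via open covers -/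

/-- A finite open cover of `X`. -/
structure FinOpenCover (X : Type*) [TopologicalSpace X] where
  n : ℕ
  U : Fin n → Set X
  opn : ∀ i, IsOpen (U i)
  cov : ⋃ i, U i = Set.univ

/-- The member `⋂_{i<n} T^{-i} U_{σ(i)}` of the dynamical refinement of a cover. -/
def dynSet (T : X → X) {m : ℕ} (U : Fin m → Set X) (n : ℕ) (σ : Fin n → Fin m) : Set X :=
  ⋂ i : Fin n, T^[(i : ℕ)] ⁻¹' U (σ i)

/-- Minimal cardinality of a subfamily of `V` covering `S`. -/
noncomputable def coverNum {α : Type*} [Fintype α] (V : α → Set X) (S : Set X) : ℕ :=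
  sInf {k | ∃ t : Finset α, t.card = k ∧ S ⊆ ⋃ i ∈ t, V i}

/-- The local classical topological entropy `h(T,𝒰)` of an open cover. -/
noncomputable def covLocEnt [TopologicalSpace X] (T : X → X) (C : FinOpenCover X) : ℝ :=
  Filter.atTop.limsup fun n : ℕ =>
    Real.log ((coverNum (fun σ : Fin n → Fin C.n => dynSet T C.U n σ) Set.univ : ℕ) : ℝ) / (n : ℝ)

/-- The classical topological entropy `h_top(T)` via open covers. -/
noncomputable def topEntCov [TopologicalSpace X] (T : X → X) : EReal :=
  ⨆ C : FinOpenCover X, ((covLocEnt T C : ℝ) : EReal)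

/-! ### Misiurewicz topological tail entropy -/

/-- The local conditional topological entropy `h(𝒰|𝒱)` of two open covers. -/
noncomputable def misCondLoc [TopologicalSpace X] (T : X → X) (CU CV : FinOpenCover X) : ℝ :=
  Filter.atTop.limsup fun n : ℕ =>
    Real.log (((⨆ τ : Fin n → Fin CV.n,
      coverNum (fun σ : Fin n → Fin CU.n => dynSet T CU.U n σ) (dynSet T CV.U n τ) : ℕ)) : ℝ) / (n : ℝ)

/-- The conditional topological entropy `h(T|𝒱) = sup_𝒰 h(𝒰|𝒱)`. -/
noncomputable def misCond [TopologicalSpace X] (T : X → X) (CV : FinOpenCover X) : EReal :=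
  ⨆ CU : FinOpenCover X, ((misCondLoc T CU CV : ℝ) : EReal)

/-- Misiurewicz's topological tail entropy `h*(T) = inf_𝒱 h(T|𝒱)`. -/
noncomputable def misTail [TopologicalSpace X] (T : X → X) : EReal :=
  ⨅ CV : FinOpenCover X, misCond T CV

/-! ### Topological tail entropy via partitions of unity -/

/-- `H̃(Φ|ψ) = Σ_φ sup_{supp ψ} φ`. -/
noncomputable def condTopStatPU [TopologicalSpace X] (Φ : PartUnity X) (ψ : X → ℝ) : ℝ :=
  ∑ i, ⨆ x ∈ tsupport ψ, Φ.f i x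

/-- The weight set `D(Ψ) = {a : inf ψ ≤ a_ψ ≤ sup ψ, Σ a_ψ = 1}`. -/
def weights (Ψ : PartUnity X) : Set (Fin Ψ.n → ℝ) :=
  {a | (∀ j, (⨅ x, Ψ.f j x) ≤ a j ∧ a j ≤ ⨆ x, Ψ.f j x) ∧ ∑ j, a j = 1}

/-- `H̃_n(Φ|Ψ) = sup_{a ∈ D(Ψ₀ⁿ⁻¹)} Σ_ψ a_ψ H̃(Φ₀ⁿ⁻¹|ψ)`. -/
noncomputable def tailStat [TopologicalSpace X] (T : X → X) (Φ Ψ : PartUnity X) (n : ℕ) : ℝ :=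
  sSup {r | ∃ a ∈ weights (PartUnity.dyn T Ψ n),
    r = ∑ j, a j * condTopStatPU (PartUnity.dyn T Φ n) ((PartUnity.dyn T Ψ n).f j)}

/-- The local conditional topological entropy `h̃(Φ|Ψ) = limsup_n (1/n) log H̃_n(Φ|Ψ)`. -/
noncomputable def tailLoc [TopologicalSpace X] (T : X → X) (Φ Ψ : PartUnity X) : ℝ :=
  Filter.atTop.limsup fun n : ℕ => Real.log (tailStat T Φ Ψ n) / (n : ℝ)

/-- The conditional topological entropy `h̃(T|Ψ) = sup_Φ h̃(Φ|Ψ)` over continuous `Φ`. -/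
noncomputable def condTopEntPU [TopologicalSpace X] (T : X → X) (Ψ : PartUnity X) : EReal :=
  ⨆ Φ : {Φ : PartUnity X // Φ.Cont}, ((tailLoc T Φ.1 Ψ : ℝ) : EReal)

/-- The topological tail entropy `h̃*(T) = inf_Ψ h̃(T|Ψ)` over continuous `Ψ`. -/
noncomputable def tailEntPU [TopologicalSpace X] (T : X → X) : EReal :=
  ⨅ Ψ : {Ψ : PartUnity X // Ψ.Cont}, condTopEntPU T Ψ.1

/-! ### Pressures -/

/-- The Birkhoff sum `S_n g = Σ_{i<n} g ∘ Tⁱ`. -/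
def birkhoff (T : X → X) (g : X → ℝ) (n : ℕ) (x : X) : ℝ :=
  ∑ i ∈ Finset.range n, g (T^[i] x)

/-- The static pressure `P̃(T,g,Φ,n) = Σ_{φ ∈ Φ₀ⁿ⁻¹} sup (φ e^{S_n g})`. -/
noncomputable def puPressStat (T : X → X) (g : X → ℝ) (Φ : PartUnity X) (n : ℕ) : ℝ :=
  ∑ i, ⨆ x, (PartUnity.dyn T Φ n).f i x * Real.exp (birkhoff T g n x)

/-- The local topological pressure `P̃_top(T,g,Φ) = lim_n (1/n) log P̃(T,g,Φ,n)`. -/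
noncomputable def puLocPress (T : X → X) (g : X → ℝ) (Φ : PartUnity X) : ℝ :=
  Filter.atTop.limsup fun n : ℕ => Real.log (puPressStat T g Φ n) / (n : ℝ)

/-- The topological pressure `P̃_top(T,g)` via continuous partitions of unity. -/
noncomputable def puTopPress [TopologicalSpace X] (T : X → X) (g : X → ℝ) : EReal :=
  ⨆ Φ : {Φ : PartUnity X // Φ.Cont}, ((puLocPress T g Φ.1 : ℝ) : EReal)

/-- The classical static pressure of an open cover:
`inf { Σ_{V ∈ 𝒱} sup_V e^{S_n g} : 𝒱 a subcover of 𝒰₀ⁿ⁻¹ }`. -/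
noncomputable def covPressStat [TopologicalSpace X] (T : X → X) (g : X → ℝ)
    (C : FinOpenCover X) (n : ℕ) : ℝ :=
  sInf {r | ∃ t : Finset (Fin n → Fin C.n),
    (Set.univ ⊆ ⋃ σ ∈ t, dynSet T C.U n σ) ∧
    r = ∑ σ ∈ t, ⨆ x ∈ dynSet T C.U n σ, Real.exp (birkhoff T g n x)}

/-- The local classical topological pressure of an open cover. -/
noncomputable def covLocPress [TopologicalSpace X] (T : X → X) (g : X → ℝ)
    (C : FinOpenCover X) : ℝ :=
  Filter.atTop.limsup fun n : ℕ => Real.log (covPressStat T g C n) / (n : ℝ)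

/-- The classical topological pressure `P_top(T,g)` via open covers. -/
noncomputable def topPress [TopologicalSpace X] (T : X → X) (g : X → ℝ) : EReal :=
  ⨆ C : FinOpenCover X, ((covLocPress T g C : ℝ) : EReal)

/-! ### Topological tail pressure -/

/-- `P̃_n(T,g,Φ|Ψ) = sup_{a ∈ D(Ψ₀ⁿ⁻¹)} Σ_ψ a_ψ Σ_φ sup_{supp ψ} (φ e^{S_n g})`. -/
noncomputable def tailPressStat [TopologicalSpace X] (T : X → X) (g : X → ℝ)
    (Φ Ψ : PartUnity X) (n : ℕ) : ℝ :=
  sSup {r | ∃ a ∈ weights (PartUnity.dyn T Ψ n),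
    r = ∑ j, a j * ∑ i, ⨆ x ∈ tsupport ((PartUnity.dyn T Ψ n).f j),
      (PartUnity.dyn T Φ n).f i x * Real.exp (birkhoff T g n x)}

/-- The local topological tail pressure `P̃(T,g,Φ|Ψ) = limsup_n (1/n) log P̃_n(T,g,Φ|Ψ)`. -/
noncomputable def tailLocPress [TopologicalSpace X] (T : X → X) (g : X → ℝ)
    (Φ Ψ : PartUnity X) : ℝ :=
  Filter.atTop.limsup fun n : ℕ => Real.log (tailPressStat T g Φ Ψ n) / (n : ℝ)

/-- The conditional topological pressure `P̃(T,g|Ψ) = sup_Φ P̃(T,g,Φ|Ψ)` over continuous `Φ`. -/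
noncomputable def condTopPressPU [TopologicalSpace X] (T : X → X) (g : X → ℝ)
    (Ψ : PartUnity X) : EReal :=
  ⨆ Φ : {Φ : PartUnity X // Φ.Cont}, ((tailLocPress T g Φ.1 Ψ : ℝ) : EReal)

/-- The topological tail pressure `P̃*(T,g) = inf_Ψ P̃(T,g|Ψ)` over continuous `Ψ`. -/
noncomputable def puTailPress [TopologicalSpace X] (T : X → X) (g : X → ℝ) : EReal :=
  ⨅ Ψ : {Ψ : PartUnity X // Ψ.Cont}, condTopPressPU T g Ψ.1

/-! ### Classical topological tail pressure (Li–Chen–Cheng) -/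

/-- The Bowen ball `B(x,ε,n) = {y : d(Tⁱx,Tⁱy) < ε for all 0 ≤ i < n}`. -/
def bowenBall [PseudoMetricSpace X] (T : X → X) (x : X) (ε : ℝ) (n : ℕ) : Set X :=
  {y | ∀ i < n, dist (T^[i] x) (T^[i] y) < ε}

/-- `E` is `(n,δ)`-separated: distinct points `y,z ∈ E` satisfy `d(Tⁱy,Tⁱz) > δ`
for some `0 ≤ i < n`. -/
def IsSep [PseudoMetricSpace X] (T : X → X) (n : ℕ) (δ : ℝ) (E : Finset X) : Prop :=
  ∀ y ∈ E, ∀ z ∈ E, y ≠ z → ∃ i < n, δ < dist (T^[i] y) (T^[i] z)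

/-- `P_n(T,g,δ,ε) = sup_x sup { Σ_{y∈E} e^{S_n g(y)} : E (n,δ)-separated ⊆ B(x,ε,n) }`. -/
noncomputable def sepPress [PseudoMetricSpace X] (T : X → X) (g : X → ℝ)
    (n : ℕ) (δ ε : ℝ) : ℝ :=
  ⨆ x : X, sSup {r | ∃ E : Finset X, ↑E ⊆ bowenBall T x ε n ∧ IsSep T n δ E ∧
    r = ∑ y ∈ E, Real.exp (birkhoff T g n y)}

/-- The classical topological tail pressure
`P*(T,g) = lim_{ε→0} lim_{δ→0} limsup_n (1/n) log P_n(T,g,δ,ε)`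
(the inner limits are monotone, hence given by `inf_ε sup_δ`). -/
noncomputable def tailPress [PseudoMetricSpace X] (T : X → X) (g : X → ℝ) : EReal :=
  ⨅ ε : {ε : ℝ // 0 < ε}, ⨆ δ : {δ : ℝ // 0 < δ},
    Filter.atTop.limsup fun n : ℕ => ((Real.log (sepPress T g n δ.1 ε.1) / (n : ℝ) : ℝ) : EReal)



/-! ### Auxiliary lemmas for Statement 18 -/

section Aux18
variable {X : Type*}

lemma biSup_le' {S : Set X} {g : X → ℝ} {a : ℝ} (ha : 0 ≤ a) (h : ∀ x ∈ S, g x ≤ a) :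
    (⨆ x ∈ S, g x) ≤ a :=
  Real.iSup_le (fun x => Real.iSup_le (fun hx => h x hx) ha) ha

lemma le_biSup' {S : Set X} {g : X → ℝ} {B : ℝ} (hB : ∀ x ∈ S, g x ≤ B) {x₀ : X}
    (hx₀ : x₀ ∈ S) : g x₀ ≤ ⨆ x ∈ S, g x := by
  have h1 : BddAbove (Set.range fun x => ⨆ _ : x ∈ S, g x) := by
    refine ⟨max B 0, ?_⟩; rintro _ ⟨x, rfl⟩
    exact Real.iSup_le (fun hx => le_max_of_le_left (hB x hx)) (le_max_right _ _)
  refine le_trans ?_ (le_ciSup h1 x₀)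
  exact le_ciSup (f := fun _ : x₀ ∈ S => g x₀) ⟨g x₀, by rintro _ ⟨_, rfl⟩; rfl⟩ hx₀

lemma biSup_nonneg {S : Set X} {g : X → ℝ} (hg : ∀ x, 0 ≤ g x) : 0 ≤ ⨆ x ∈ S, g x :=
  Real.iSup_nonneg fun x => Real.iSup_nonneg fun _ => hg x

lemma PartUnity.n_pos [Nonempty X] (Φ : PartUnity X) : 0 < Φ.n := by
  by_contra h
  have h0 : Φ.n = 0 := Nat.eq_zero_of_not_pos h
  have hs := Φ.sum_one (Classical.arbitrary X)
  haveI : IsEmpty (Fin Φ.n) := by rw [h0]; infer_instance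
  simp [Finset.univ_eq_empty] at hs

lemma PartUnity.dyn_n (T : X → X) (Φ : PartUnity X) (n : ℕ) :
    (PartUnity.dyn T Φ n).n = Φ.n ^ n := by
  induction n with
  | zero => rfl
  | succ n ih =>
    show Φ.n * (PartUnity.dyn T Φ n).n = Φ.n ^ (n + 1)
    rw [ih, pow_succ, mul_comm]

/-- The key combinatorial estimate, by induction on `n`. -/
lemma key_ineq [TopologicalSpace X] (T : X → X) (Φ' Φ : PartUnity X) {c : ℝ} (hc : 0 ≤ c)
    (hb : ∀ j : Fin Φ.n, (∑ a : Fin Φ'.n, ⨆ y ∈ tsupport (Φ.f j), Φ'.f a y) ≤ c) :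
    ∀ (n m : ℕ) (S : Set X) (w : X → ℝ), (∀ x, 0 ≤ w x) → (∀ x, w x ≤ 1) →
    (∑ i, ⨆ x ∈ S, w x * (PartUnity.dyn T Φ' n).f i (T^[m] x)) ≤
      c ^ n * ∑ j, ⨆ x ∈ S, w x * (PartUnity.dyn T Φ n).f j (T^[m] x) := by
  intro n
  induction n with
  | zero =>
    intro m S w hw0 hw1
    simp [PartUnity.dyn, PartUnity.triv]
    exact le_rfl
  | succ n ih =>
    intro m S w hw0 hw1
    set G := PartUnity.dyn T Φ' n with hG
    set F := PartUnity.dyn T Φ n with hF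
    have hB0 : ∀ (j : Fin Φ.n) (a : Fin Φ'.n),
        (0:ℝ) ≤ ⨆ y ∈ tsupport (Φ.f j), Φ'.f a y :=
      fun j a => biSup_nonneg (Φ'.nonneg a)
    have hL : (∑ i, ⨆ x ∈ S, w x * (PartUnity.dyn T Φ' (n+1)).f i (T^[m] x))
        = ∑ a : Fin Φ'.n, ∑ b : Fin G.n,
            ⨆ x ∈ S, w x * Φ'.f a (T^[m] x) * G.f b (T^[m+1] x) := by
      rw [show PartUnity.dyn T Φ' (n+1) = Φ'.join (G.comp T) from rfl]
      rw [show (∑ a : Fin Φ'.n, ∑ b : Fin G.n,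
            ⨆ x ∈ S, w x * Φ'.f a (T^[m] x) * G.f b (T^[m+1] x))
          = ∑ p : Fin Φ'.n × Fin G.n,
            ⨆ x ∈ S, w x * Φ'.f p.1 (T^[m] x) * G.f p.2 (T^[m+1] x) from
        (Fintype.sum_prod_type (f := fun p : Fin Φ'.n × Fin G.n =>
          ⨆ x ∈ S, w x * Φ'.f p.1 (T^[m] x) * G.f p.2 (T^[m+1] x))).symm]
      refine Fintype.sum_equiv finProdFinEquiv.symm _ _ fun i => ?_
      simp [PartUnity.join, PartUnity.comp, ← Function.iterate_succ_apply', ← mul_assoc]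
      rfl
    have hR : (∑ j, ⨆ x ∈ S, w x * (PartUnity.dyn T Φ (n+1)).f j (T^[m] x))
        = ∑ j : Fin Φ.n, ∑ τ : Fin F.n,
            ⨆ x ∈ S, w x * Φ.f j (T^[m] x) * F.f τ (T^[m+1] x) := by
      rw [show PartUnity.dyn T Φ (n+1) = Φ.join (F.comp T) from rfl]
      rw [show (∑ j : Fin Φ.n, ∑ τ : Fin F.n,
            ⨆ x ∈ S, w x * Φ.f j (T^[m] x) * F.f τ (T^[m+1] x))
          = ∑ p : Fin Φ.n × Fin F.n,
            ⨆ x ∈ S, w x * Φ.f p.1 (T^[m] x) * F.f p.2 (T^[m+1] x) from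
        (Fintype.sum_prod_type (f := fun p : Fin Φ.n × Fin F.n =>
          ⨆ x ∈ S, w x * Φ.f p.1 (T^[m] x) * F.f p.2 (T^[m+1] x))).symm]
      refine Fintype.sum_equiv finProdFinEquiv.symm _ _ fun i => ?_
      simp [PartUnity.join, PartUnity.comp, ← Function.iterate_succ_apply', ← mul_assoc]
      rfl
    rw [hL, hR]
    have hs0 : ∀ (j : Fin Φ.n) (b : Fin G.n),
        (0:ℝ) ≤ ⨆ x ∈ S, w x * Φ.f j (T^[m] x) * G.f b (T^[m+1] x) :=
      fun j b => biSup_nonneg fun x =>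
        mul_nonneg (mul_nonneg (hw0 x) (Φ.nonneg _ _)) (G.nonneg _ _)
    have step1 : ∀ (a : Fin Φ'.n) (b : Fin G.n),
        (⨆ x ∈ S, w x * Φ'.f a (T^[m] x) * G.f b (T^[m+1] x))
        ≤ ∑ j : Fin Φ.n, (⨆ y ∈ tsupport (Φ.f j), Φ'.f a y) *
            ⨆ x ∈ S, w x * Φ.f j (T^[m] x) * G.f b (T^[m+1] x) := by
      intro a b
      apply biSup_le'
      · exact Finset.sum_nonneg fun j _ => mul_nonneg (hB0 j a) (hs0 j b)
      · intro x hx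
        have expand : w x * Φ'.f a (T^[m] x) * G.f b (T^[m+1] x)
            = ∑ j, Φ.f j (T^[m] x) * (w x * Φ'.f a (T^[m] x) * G.f b (T^[m+1] x)) := by
          rw [← Finset.sum_mul, Φ.sum_one, one_mul]
        rw [expand]
        refine Finset.sum_le_sum fun j _ => ?_
        have hterm : Φ.f j (T^[m] x) * (w x * Φ'.f a (T^[m] x) * G.f b (T^[m+1] x))
            ≤ (⨆ y ∈ tsupport (Φ.f j), Φ'.f a y) *
                (w x * Φ.f j (T^[m] x) * G.f b (T^[m+1] x)) := by
          rcases eq_or_ne (Φ.f j (T^[m] x)) 0 with h0 | h0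
          · simp [h0]
          · have hmem : T^[m] x ∈ tsupport (Φ.f j) :=
              subset_closure (Function.mem_support.mpr h0)
            have hBle : Φ'.f a (T^[m] x) ≤ ⨆ y ∈ tsupport (Φ.f j), Φ'.f a y :=
              le_biSup' (fun y _ => Φ'.le_one a y) hmem
            calc Φ.f j (T^[m] x) * (w x * Φ'.f a (T^[m] x) * G.f b (T^[m+1] x))
                = Φ'.f a (T^[m] x) * (w x * Φ.f j (T^[m] x) * G.f b (T^[m+1] x)) := by
                  ring
              _ ≤ (⨆ y ∈ tsupport (Φ.f j), Φ'.f a y) *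
                    (w x * Φ.f j (T^[m] x) * G.f b (T^[m+1] x)) := by
                  refine mul_le_mul_of_nonneg_right hBle ?_
                  exact mul_nonneg (mul_nonneg (hw0 x) (Φ.nonneg _ _)) (G.nonneg _ _)
        refine hterm.trans (mul_le_mul_of_nonneg_left ?_ (hB0 j a))
        refine le_biSup' (g := fun y => w y * Φ.f j (T^[m] y) * G.f b (T^[m+1] y))
          (B := 1) (fun y _ => ?_) hx
        exact mul_le_one₀ (mul_le_one₀ (hw1 y) (Φ.nonneg _ _) (Φ.le_one _ _))
          (G.nonneg _ _) (G.le_one _ _)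
    calc ∑ a : Fin Φ'.n, ∑ b : Fin G.n,
          ⨆ x ∈ S, w x * Φ'.f a (T^[m] x) * G.f b (T^[m+1] x)
        ≤ ∑ a : Fin Φ'.n, ∑ b : Fin G.n, ∑ j : Fin Φ.n,
            (⨆ y ∈ tsupport (Φ.f j), Φ'.f a y) *
              ⨆ x ∈ S, w x * Φ.f j (T^[m] x) * G.f b (T^[m+1] x) :=
          Finset.sum_le_sum fun a _ => Finset.sum_le_sum fun b _ => step1 a b
      _ = ∑ j : Fin Φ.n, (∑ a : Fin Φ'.n, ⨆ y ∈ tsupport (Φ.f j), Φ'.f a y) *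
            ∑ b : Fin G.n, ⨆ x ∈ S, w x * Φ.f j (T^[m] x) * G.f b (T^[m+1] x) := by
          have A1 : (∑ a : Fin Φ'.n, ∑ b : Fin G.n, ∑ j : Fin Φ.n,
              (⨆ y ∈ tsupport (Φ.f j), Φ'.f a y) *
                ⨆ x ∈ S, w x * Φ.f j (T^[m] x) * G.f b (T^[m+1] x))
              = ∑ a : Fin Φ'.n, ∑ j : Fin Φ.n, ∑ b : Fin G.n,
              (⨆ y ∈ tsupport (Φ.f j), Φ'.f a y) *
                ⨆ x ∈ S, w x * Φ.f j (T^[m] x) * G.f b (T^[m+1] x) :=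
            Finset.sum_congr rfl fun a _ => Finset.sum_comm
          rw [A1]
          refine (Finset.sum_comm).trans (Finset.sum_congr rfl fun j _ => ?_)
          rw [Finset.sum_mul]
          refine Finset.sum_congr rfl fun a _ => ?_
          exact (Finset.mul_sum _ _ _).symm
      _ ≤ ∑ j : Fin Φ.n, c *
            (c ^ n * ∑ τ : Fin F.n, ⨆ x ∈ S, w x * Φ.f j (T^[m] x) * F.f τ (T^[m+1] x)) := by
          refine Finset.sum_le_sum fun j _ => ?_
          have h1 : (∑ b : Fin G.n, ⨆ x ∈ S, w x * Φ.f j (T^[m] x) * G.f b (T^[m+1] x))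
              ≤ c ^ n * ∑ τ : Fin F.n, ⨆ x ∈ S, w x * Φ.f j (T^[m] x) * F.f τ (T^[m+1] x) := by
            have := ih (m+1) S (fun x => w x * Φ.f j (T^[m] x))
              (fun x => mul_nonneg (hw0 x) (Φ.nonneg _ _))
              (fun x => mul_le_one₀ (hw1 x) (Φ.nonneg _ _) (Φ.le_one _ _))
            simpa using this
          calc (∑ a : Fin Φ'.n, ⨆ y ∈ tsupport (Φ.f j), Φ'.f a y) *
                ∑ b : Fin G.n, ⨆ x ∈ S, w x * Φ.f j (T^[m] x) * G.f b (T^[m+1] x)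
              ≤ c * ∑ b : Fin G.n, ⨆ x ∈ S, w x * Φ.f j (T^[m] x) * G.f b (T^[m+1] x) :=
                mul_le_mul_of_nonneg_right (hb j)
                  (Finset.sum_nonneg fun b _ => hs0 j b)
            _ ≤ c * (c ^ n * ∑ τ : Fin F.n,
                  ⨆ x ∈ S, w x * Φ.f j (T^[m] x) * F.f τ (T^[m+1] x)) :=
                mul_le_mul_of_nonneg_left h1 hc
      _ = c ^ (n+1) * ∑ j : Fin Φ.n, ∑ τ : Fin F.n,
            ⨆ x ∈ S, w x * Φ.f j (T^[m] x) * F.f τ (T^[m+1] x) := by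
          rw [Finset.mul_sum]
          refine Finset.sum_congr rfl fun j _ => ?_
          ring

end Aux18


section Aux18b
variable {X : Type*} [MetricSpace X] [CompactSpace X] [Nonempty X]

lemma condTopStatPU_le_card (Φ : PartUnity X) (ψ : X → ℝ) :
    condTopStatPU Φ ψ ≤ (Φ.n : ℝ) := by
  have h : ∀ i : Fin Φ.n, (⨆ x ∈ tsupport ψ, Φ.f i x) ≤ 1 :=
    fun i => biSup_le' zero_le_one fun x _ => Φ.le_one i x
  calc condTopStatPU Φ ψ ≤ ∑ _i : Fin Φ.n, (1:ℝ) := Finset.sum_le_sum fun i _ => h i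
    _ = (Φ.n : ℝ) := by simp

lemma weights_mem_nonneg {Ψ : PartUnity X} {a : Fin Ψ.n → ℝ} (ha : a ∈ weights Ψ)
    (j : Fin Ψ.n) : 0 ≤ a j :=
  le_trans (le_ciInf fun x => Ψ.nonneg j x) (ha.1 j).1

lemma sum_weights_le (T : X → X) (Φ Ψ : PartUnity X) (n : ℕ) {a}
    (ha : a ∈ weights (PartUnity.dyn T Ψ n)) :
    (∑ j, a j * condTopStatPU (PartUnity.dyn T Φ n) ((PartUnity.dyn T Ψ n).f j))
      ≤ ((PartUnity.dyn T Φ n).n : ℝ) := by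
  calc (∑ j, a j * condTopStatPU (PartUnity.dyn T Φ n) ((PartUnity.dyn T Ψ n).f j))
      ≤ ∑ j, a j * ((PartUnity.dyn T Φ n).n : ℝ) :=
        Finset.sum_le_sum fun j _ => mul_le_mul_of_nonneg_left
          (condTopStatPU_le_card _ _) (weights_mem_nonneg ha j)
    _ = ((PartUnity.dyn T Φ n).n : ℝ) := by rw [← Finset.sum_mul, ha.2, one_mul]

lemma le_tailStat (T : X → X) (Φ Ψ : PartUnity X) (n : ℕ) {a}
    (ha : a ∈ weights (PartUnity.dyn T Ψ n)) :
    (∑ j, a j * condTopStatPU (PartUnity.dyn T Φ n) ((PartUnity.dyn T Ψ n).f j))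
      ≤ tailStat T Φ Ψ n := by
  simp only [tailStat]
  refine le_csSup ⟨((PartUnity.dyn T Φ n).n : ℝ), ?_⟩ ⟨a, ha, rfl⟩
  rintro r ⟨b, hb, rfl⟩
  exact sum_weights_le T Φ Ψ n hb

lemma tailStat_le_forall (T : X → X) (Φ Ψ : PartUnity X) (n : ℕ) {K : ℝ} (hK : 0 ≤ K)
    (h : ∀ a ∈ weights (PartUnity.dyn T Ψ n),
      (∑ j, a j * condTopStatPU (PartUnity.dyn T Φ n) ((PartUnity.dyn T Ψ n).f j)) ≤ K) :
    tailStat T Φ Ψ n ≤ K := by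
  simp only [tailStat]
  refine Real.sSup_le ?_ hK
  rintro r ⟨a, ha, rfl⟩
  exact h a ha

lemma one_le_tailStat (T : X → X) (Φ Ψ : PartUnity X) (n : ℕ) :
    1 ≤ tailStat T Φ Ψ n := by
  obtain ⟨x₀⟩ := (inferInstance : Nonempty X)
  set P := PartUnity.dyn T Ψ n with hP
  set Q := PartUnity.dyn T Φ n with hQ
  set a : Fin P.n → ℝ := fun j => P.f j x₀ with ha
  have hmem : a ∈ weights P := by
    refine ⟨fun j => ⟨?_, ?_⟩, P.sum_one x₀⟩
    · exact ciInf_le ⟨0, by rintro _ ⟨x, rfl⟩; exact P.nonneg j x⟩ x₀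
    · exact le_ciSup ⟨1, by rintro _ ⟨x, rfl⟩; exact P.le_one j x⟩ x₀
  have hval : 1 ≤ ∑ j, a j * condTopStatPU Q (P.f j) := by
    have key : ∀ j : Fin P.n, a j ≤ a j * condTopStatPU Q (P.f j) := by
      intro j
      rcases eq_or_ne (a j) 0 with h0 | h0
      · simp [h0]
      · have hx₀ : x₀ ∈ tsupport (P.f j) := subset_closure (Function.mem_support.mpr h0)
        have h1 : 1 ≤ condTopStatPU Q (P.f j) := by
          have h2 : ∀ i : Fin Q.n, Q.f i x₀ ≤ ⨆ x ∈ tsupport (P.f j), Q.f i x :=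
            fun i => le_biSup' (fun x _ => Q.le_one i x) hx₀
          calc (1:ℝ) = ∑ i, Q.f i x₀ := (Q.sum_one x₀).symm
            _ ≤ _ := Finset.sum_le_sum fun i _ => h2 i
        nth_rewrite 1 [← mul_one (a j)]
        exact mul_le_mul_of_nonneg_left h1 (P.nonneg j x₀)
    calc (1:ℝ) = ∑ j, a j := (P.sum_one x₀).symm
      _ ≤ _ := Finset.sum_le_sum fun j _ => key j
  exact hval.trans (le_tailStat T Φ Ψ n hmem)

lemma tailStat_mono (T : X → X) (Φ' Φ Ψ : PartUnity X) {c : ℝ} (hc : 0 ≤ c)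
    (hb : ∀ j : Fin Φ.n, (∑ a : Fin Φ'.n, ⨆ y ∈ tsupport (Φ.f j), Φ'.f a y) ≤ c)
    (n : ℕ) : tailStat T Φ' Ψ n ≤ c ^ n * tailStat T Φ Ψ n := by
  have hcond : ∀ ψ : X → ℝ, condTopStatPU (PartUnity.dyn T Φ' n) ψ
      ≤ c ^ n * condTopStatPU (PartUnity.dyn T Φ n) ψ := by
    intro ψ
    have h := key_ineq T Φ' Φ hc hb n 0 (tsupport ψ) (fun _ => 1)
      (fun _ => zero_le_one) (fun _ => le_rfl)
    simpa [condTopStatPU] using h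
  refine tailStat_le_forall T Φ' Ψ n
    (mul_nonneg (pow_nonneg hc n) (le_trans zero_le_one (one_le_tailStat T Φ Ψ n)))
    (fun a ha => ?_)
  calc (∑ j, a j * condTopStatPU (PartUnity.dyn T Φ' n) ((PartUnity.dyn T Ψ n).f j))
      ≤ ∑ j, a j * (c ^ n * condTopStatPU (PartUnity.dyn T Φ n) ((PartUnity.dyn T Ψ n).f j)) :=
        Finset.sum_le_sum fun j _ =>
          mul_le_mul_of_nonneg_left (hcond _) (weights_mem_nonneg ha j)
    _ = c ^ n * ∑ j, a j * condTopStatPU (PartUnity.dyn T Φ n) ((PartUnity.dyn T Ψ n).f j) := by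
        rw [Finset.mul_sum]
        exact Finset.sum_congr rfl fun j _ => by ring
    _ ≤ c ^ n * tailStat T Φ Ψ n :=
        mul_le_mul_of_nonneg_left (le_tailStat T Φ Ψ n ha) (pow_nonneg hc n)

lemma tailStat_le_card (T : X → X) (Φ Ψ : PartUnity X) (n : ℕ) :
    tailStat T Φ Ψ n ≤ ((PartUnity.dyn T Φ n).n : ℝ) :=
  tailStat_le_forall T Φ Ψ n (Nat.cast_nonneg _) (fun a ha => sum_weights_le T Φ Ψ n ha)

lemma tailu_nonneg (T : X → X) (Φ Ψ : PartUnity X) (n : ℕ) :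
    0 ≤ Real.log (tailStat T Φ Ψ n) / (n : ℝ) :=
  div_nonneg (Real.log_nonneg (one_le_tailStat T Φ Ψ n)) (Nat.cast_nonneg n)

lemma tailu_le (T : X → X) (Φ Ψ : PartUnity X) (n : ℕ) :
    Real.log (tailStat T Φ Ψ n) / (n : ℝ) ≤ Real.log Φ.n := by
  have hlogn : (0:ℝ) ≤ Real.log Φ.n :=
    Real.log_nonneg (by exact_mod_cast Φ.n_pos)
  rcases Nat.eq_zero_or_pos n with rfl | hn
  · simpa using hlogn
  · have hnpos : (0:ℝ) < n := by exact_mod_cast hn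
    have h1 : tailStat T Φ Ψ n ≤ ((Φ.n : ℝ)) ^ n := by
      have h := tailStat_le_card T Φ Ψ n
      rwa [PartUnity.dyn_n, Nat.cast_pow] at h
    have h2 : Real.log (tailStat T Φ Ψ n) ≤ (n : ℝ) * Real.log Φ.n := by
      calc Real.log (tailStat T Φ Ψ n) ≤ Real.log ((Φ.n : ℝ) ^ n) :=
            Real.log_le_log (lt_of_lt_of_le one_pos (one_le_tailStat T Φ Ψ n)) h1
        _ = (n : ℝ) * Real.log Φ.n := by rw [Real.log_pow]
    rw [div_le_iff₀ hnpos]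
    linarith [h2]

lemma exists_delta (T : X → X) (Φ' : PartUnity X) (hΦ' : Φ'.Cont) (Ψ : PartUnity X)
    {ε : ℝ} (hε : 0 < ε) :
    ∃ δ > 0, ∀ Φ : PartUnity X, Φ.diam < δ →
      tailLoc T Φ' Ψ ≤ tailLoc T Φ Ψ + ε := by
  set c := Real.exp ε with hcdef
  have hc1 : 1 < c := Real.one_lt_exp_iff.mpr hε
  have hm : 0 < Φ'.n := Φ'.n_pos
  have hmne : ((Φ'.n : ℝ)) ≠ 0 := by positivity
  set ε₀ := (c - 1) / Φ'.n with hε₀def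
  have hε₀ : 0 < ε₀ := div_pos (by linarith) (by exact_mod_cast hm)
  have hu : ∀ a : Fin Φ'.n, ∃ δ > 0, ∀ x y : X, dist x y < δ →
      |Φ'.f a x - Φ'.f a y| < ε₀ := by
    intro a
    have huc : UniformContinuous (Φ'.f a) :=
      CompactSpace.uniformContinuous_of_continuous (hΦ' a)
    rcases Metric.uniformContinuous_iff.mp huc ε₀ hε₀ with ⟨δ, hδ, H⟩
    exact ⟨δ, hδ, fun x y h => by have h2 := H h; rwa [Real.dist_eq] at h2⟩
  choose d hd hH using hu
  haveI : Nonempty (Fin Φ'.n) := ⟨⟨0, hm⟩⟩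
  refine ⟨Finset.univ.inf' Finset.univ_nonempty d, ?_, ?_⟩
  · exact (Finset.lt_inf'_iff _).mpr fun a _ => hd a
  intro Φ hΦd
  have hb : ∀ j : Fin Φ.n, (∑ a : Fin Φ'.n, ⨆ y ∈ tsupport (Φ.f j), Φ'.f a y) ≤ c := by
    intro j
    rcases (tsupport (Φ.f j)).eq_empty_or_nonempty with hS | ⟨y₀, hy₀⟩
    · simp only [hS, Set.mem_empty_iff_false, Real.iSup_of_isEmpty, ciSup_const,
        Finset.sum_const_zero]
      linarith
    · have hdist : ∀ y ∈ tsupport (Φ.f j), dist y y₀ < Finset.univ.inf' Finset.univ_nonempty d := by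
        intro y hy
        have hbd : Bornology.IsBounded (tsupport (Φ.f j)) :=
          isCompact_univ.isBounded.subset (Set.subset_univ _)
        have h1 : dist y y₀ ≤ Metric.diam (tsupport (Φ.f j)) :=
          Metric.dist_le_diam_of_mem hbd hy hy₀
        have h2 : Metric.diam (tsupport (Φ.f j)) ≤ Φ.diam := by
          show Metric.diam (tsupport (Φ.f j)) ≤ ⨆ i, Metric.diam (tsupport (Φ.f i))
          exact le_ciSup (f := fun i => Metric.diam (tsupport (Φ.f i)))
            ((Set.finite_range _).bddAbove) j
        linarith
      have hBa : ∀ a : Fin Φ'.n, (⨆ y ∈ tsupport (Φ.f j), Φ'.f a y) ≤ Φ'.f a y₀ + ε₀ := by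
        intro a
        refine biSup_le' (add_nonneg (Φ'.nonneg a y₀) hε₀.le) fun y hy => ?_
        have hlt : dist y y₀ < d a :=
          lt_of_lt_of_le (hdist y hy) (Finset.inf'_le _ (Finset.mem_univ a))
        have h3 := hH a y y₀ hlt
        have h4 : Φ'.f a y - Φ'.f a y₀ ≤ |Φ'.f a y - Φ'.f a y₀| := le_abs_self _
        linarith
      calc (∑ a, ⨆ y ∈ tsupport (Φ.f j), Φ'.f a y)
          ≤ ∑ a, (Φ'.f a y₀ + ε₀) := Finset.sum_le_sum fun a _ => hBa a
        _ = 1 + (Φ'.n : ℝ) * ε₀ := by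
            rw [Finset.sum_add_distrib, Φ'.sum_one, Finset.sum_const, Finset.card_univ,
              Fintype.card_fin, nsmul_eq_mul]
        _ = c := by rw [hε₀def]; field_simp; ring
  have hc0 : (0:ℝ) ≤ c := by linarith
  have hcomp := fun n => tailStat_mono T Φ' Φ Ψ hc0 hb n
  have hun : ∀ n : ℕ, 1 ≤ n →
      Real.log (tailStat T Φ' Ψ n) / (n : ℝ)
        ≤ Real.log (tailStat T Φ Ψ n) / (n : ℝ) + ε := by
    intro n hn
    have hnpos : (0:ℝ) < n := by exact_mod_cast hn
    have ht' : (0:ℝ) < tailStat T Φ' Ψ n :=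
      lt_of_lt_of_le one_pos (one_le_tailStat T Φ' Ψ n)
    have ht : (1:ℝ) ≤ tailStat T Φ Ψ n := one_le_tailStat T Φ Ψ n
    have hlog : Real.log (tailStat T Φ' Ψ n)
        ≤ (n : ℝ) * ε + Real.log (tailStat T Φ Ψ n) := by
      calc Real.log (tailStat T Φ' Ψ n) ≤ Real.log (c ^ n * tailStat T Φ Ψ n) :=
            Real.log_le_log ht' (hcomp n)
        _ = (n : ℝ) * ε + Real.log (tailStat T Φ Ψ n) := by
            rw [Real.log_mul (pow_ne_zero n (by linarith)) (by linarith),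
              Real.log_pow, hcdef, Real.log_exp]
    rw [div_le_iff₀ hnpos]
    have hexp : (Real.log (tailStat T Φ Ψ n) / (n : ℝ) + ε) * (n : ℝ)
        = Real.log (tailStat T Φ Ψ n) + ε * (n : ℝ) := by
      field_simp
    rw [hexp]
    linarith [hlog]
  -- limsup argument
  have hbddU : Filter.atTop.IsBoundedUnder (· ≤ ·)
      (fun n : ℕ => Real.log (tailStat T Φ Ψ n) / (n : ℝ)) :=
    Filter.isBoundedUnder_of ⟨Real.log Φ.n, fun n => tailu_le T Φ Ψ n⟩
  have hgb : Filter.atTop.IsBoundedUnder (· ≥ ·)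
      (fun n : ℕ => Real.log (tailStat T Φ Ψ n) / (n : ℝ)) :=
    Filter.isBoundedUnder_of ⟨0, fun n => tailu_nonneg T Φ Ψ n⟩
  have hgb' : Filter.atTop.IsBoundedUnder (· ≥ ·)
      (fun n : ℕ => Real.log (tailStat T Φ' Ψ n) / (n : ℝ)) :=
    Filter.isBoundedUnder_of ⟨0, fun n => tailu_nonneg T Φ' Ψ n⟩
  have hcobdd : Filter.atTop.IsCoboundedUnder (· ≤ ·)
      (fun n : ℕ => Real.log (tailStat T Φ Ψ n) / (n : ℝ)) :=
    hgb.isCoboundedUnder_le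
  have h1 : tailLoc T Φ' Ψ ≤ Filter.atTop.limsup
      (fun n : ℕ => Real.log (tailStat T Φ Ψ n) / (n : ℝ) + ε) := by
    refine Filter.limsup_le_limsup ?_ ?_ ?_
    · filter_upwards [Filter.eventually_ge_atTop 1] with n hn using hun n hn
    · exact hgb'.isCoboundedUnder_le
    · exact Filter.isBoundedUnder_of
        ⟨Real.log Φ.n + ε, fun n => by linarith [tailu_le T Φ Ψ n]⟩
  rwa [limsup_add_const Filter.atTop
    (fun n : ℕ => Real.log (tailStat T Φ Ψ n) / (n : ℝ)) ε hbddU hcobdd] at h1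

end Aux18b

/-- If `diam(Φ_k) → 0` then `h̃(Φ_k|Ψ) → h̃(T|Ψ)` for every
continuous partition of unity `Ψ`. -/
theorem tailLoc_tendsto_condTopEntPU {X : Type*} [MetricSpace X] [CompactSpace X] [Nonempty X]
    [MeasurableSpace X] [BorelSpace X]
    (T : X → X) (hT : Continuous T) (hTsurj : Function.Surjective T)
    (Φ : ℕ → PartUnity X) (hΦc : ∀ k, (Φ k).Cont)
    (hdiam : Filter.Tendsto (fun k => (Φ k).diam) Filter.atTop (nhds 0))
    (Ψ : PartUnity X) (hΨ : Ψ.Cont) :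
    Filter.Tendsto (fun k => ((tailLoc T (Φ k) Ψ : ℝ) : EReal)) Filter.atTop
      (nhds (condTopEntPU T Ψ)) := by
  have hub : ∀ k, ((tailLoc T (Φ k) Ψ : ℝ) : EReal) ≤ condTopEntPU T Ψ := by
    intro k
    exact le_iSup (fun Φ0 : {Φ0 : PartUnity X // Φ0.Cont} =>
      ((tailLoc T Φ0.1 Ψ : ℝ) : EReal)) ⟨Φ k, hΦc k⟩
  refine tendsto_order.2 ⟨?_, ?_⟩
  · intro b hb
    rw [condTopEntPU, lt_iSup_iff] at hb
    obtain ⟨⟨Φ', hΦ'⟩, hb⟩ := hb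
    induction b with
    | bot => exact Filter.Eventually.of_forall fun k => EReal.bot_lt_coe _
    | coe b' =>
      have hb' : b' < tailLoc T Φ' Ψ := by exact_mod_cast hb
      have hε : 0 < (tailLoc T Φ' Ψ - b') / 2 := by linarith
      obtain ⟨δ, hδ, hkey⟩ := exists_delta T Φ' hΦ' Ψ hε
      have hev : ∀ᶠ k in Filter.atTop, (Φ k).diam < δ := hdiam.eventually_lt_const hδ
      filter_upwards [hev] with k hk
      have h2 := hkey (Φ k) hk
      have h3 : b' < tailLoc T (Φ k) Ψ := by linarith
      exact_mod_cast h3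
    | top => exact absurd hb (by simp)
  · intro b hb
    exact Filter.Eventually.of_forall fun k => lt_of_le_of_lt (hub k) hb
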